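/- Let k be a field and A ⊆ B an extension of commutative graded-connected k-algebras such that A is a direct summand of B as an A-module. If b_1, …, b_n ∈ A is a regular sequence on B, then it is a regular sequence on A. -/
import Mathlib


open Finset

/-- A sequence `b : Fin n → A` of elements of `A` is regular on an `A`-module `M` if each
`b i` is a nonzerodivisor on `M/(b_1, …, b_{i-1})M` and `(b_1, …, b_n)M ≠ M`. -/
def IsRegularSeqOn {A : Type*} [CommRing A] (M : Type*) [AddCommGroup M] [Module A M]
    {n : ℕ} (b : Fin n → A) : Prop :=
  (∀ i : Fin n, ∀ x : M,
      b i • x ∈ (Ideal.span (b '' {j | j < i})) • (⊤ : Submodule A M) →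
        x ∈ (Ideal.span (b '' {j | j < i})) • (⊤ : Submodule A M)) ∧
  (Ideal.span (Set.range b)) • (⊤ : Submodule A M) ≠ ⊤

/-- If `π : B →ₗ[A] A`, generators `S ⊆ J`, and `y` lies in the ideal of `B`
generated by the image of `S`, then `π y ∈ J`. -/
lemma pi_mem_of_mem_span_image {A B : Type*} [CommRing A] [CommRing B] [Algebra A B]
    (π : B →ₗ[A] A) (J : Ideal A) (S : Set A) (hS : S ⊆ J) {y : B}
    (hy : y ∈ Ideal.span (algebraMap A B '' S)) : π y ∈ J := by
  rw [Ideal.span, Submodule.mem_span_set'] at hy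
  obtain ⟨m, f, g, rfl⟩ := hy
  rw [map_sum]
  refine Ideal.sum_mem _ fun i _ => ?_
  obtain ⟨t, ht, hgt⟩ := (g i).2
  have : f i • (g i : B) = t • (f i) := by
    rw [← hgt, smul_eq_mul, mul_comm, Algebra.smul_def]
  rw [this, map_smul, smul_eq_mul]
  exact Ideal.mul_mem_right _ _ (hS ht)

/-- Let `k` be a field and `A ⊆ B` an extension of commutative
graded-connected `k`-algebras such that `A` is a direct summand of `B` as an `A`-module.
If `b_1, …, b_n ∈ A` is a regular sequence on `B`, then it is a regular sequence on `A`. -/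
theorem isRegularSeqOn_of_directSummand
    (k : Type*) [Field k] (A B : Type*) [CommRing A] [CommRing B]
    [Algebra k A] [Algebra k B] [Algebra A B] [IsScalarTower k A B]
    (hinj : Function.Injective (algebraMap A B))
    -- gradings with finite-dimensional pieces, connected: `A₀ = B₀ = k`
    (𝒜 : ℕ → Submodule k A) (ℬ : ℕ → Submodule k B)
    [GradedAlgebra 𝒜] [GradedAlgebra ℬ]
    [∀ i, Module.Finite k (𝒜 i)] [∀ i, Module.Finite k (ℬ i)]
    (hA0 : ∀ x ∈ 𝒜 0, ∃ c : k, x = algebraMap k A c)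
    (hB0 : ∀ x ∈ ℬ 0, ∃ c : k, x = algebraMap k B c)
    (hgr : ∀ i, ∀ x ∈ 𝒜 i, algebraMap A B x ∈ ℬ i)  -- the inclusion is graded
    -- `A` is a direct summand of `B` as an `A`-module
    (π : B →ₗ[A] A) (hπ : ∀ a : A, π (algebraMap A B a) = a)
    {n : ℕ} (b : Fin n → A)
    (hb : IsRegularSeqOn B (fun i => algebraMap A B (b i))) :
    IsRegularSeqOn A b := by
  obtain ⟨hb1, hb2⟩ := hb
  constructor
  · intro i x hx
    set J : Ideal A := Ideal.span (b '' {j | j < i}) with hJ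
    rw [Ideal.smul_eq_mul, Ideal.mul_top] at hx ⊢
    have himg : (fun i => algebraMap A B (b i)) '' {j | j < i}
        = algebraMap A B '' (b '' {j | j < i}) := (Set.image_image _ _ _).symm
    have hmap : Ideal.span ((fun i => algebraMap A B (b i)) '' {j | j < i})
        = J.map (algebraMap A B) := by
      rw [himg, hJ, Ideal.map_span]
    have hx' := hb1 i (algebraMap A B x)
    rw [Ideal.smul_eq_mul, Ideal.mul_top, hmap] at hx'
    have hmem : algebraMap A B (b i) * algebraMap A B x ∈ J.map (algebraMap A B) := by
      rw [← map_mul]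
      exact Ideal.mem_map_of_mem _ (by simpa using hx)
    have hxB := hx' (by simpa [smul_eq_mul] using hmem)
    rw [hJ, Ideal.map_span] at hxB
    have := pi_mem_of_mem_span_image π J (b '' {j | j < i}) Ideal.subset_span hxB
    rwa [hπ] at this
  · intro h
    apply hb2
    rw [Ideal.smul_eq_mul, Ideal.mul_top] at h ⊢
    rw [Ideal.eq_top_iff_one] at h ⊢
    have : Set.range (fun i => algebraMap A B (b i)) = algebraMap A B '' Set.range b := by
      rw [← Set.range_comp]; rfl
    rw [this, ← Ideal.map_span]
    simpa using Ideal.mem_map_of_mem (algebraMap A B) h
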